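/- Let K be an open max cone in ℝ≥0^n (i.e., K \ {0} is open in ℝ≥0^n with the topology induced from ℝ^n) that contains no unit vector e^p (where e^p_j = 1 if j = p and 0 otherwise). Then every set of generators for K is totally dependent. -/

import Mathlib

open scoped NNReal

set_option synthInstance.maxHeartbeats 1000000
set_option maxHeartbeats 1000000

/-- The max-algebraic span of `S`: all vectors `⨆_{x ∈ S} λ_x • x` where only
finitely many coefficients `λ_x` are nonzero (`MaxSpan ∅ = {0}`). -/
def MaxSpan {n : ℕ} (S : Set (Fin n → ℝ≥0)) : Set (Fin n → ℝ≥0) :=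
  {u | ∃ (F : Finset (Fin n → ℝ≥0)) (lam : (Fin n → ℝ≥0) → ℝ≥0),
    ↑F ⊆ S ∧ u = F.sup (fun x => lam x • x)}

/-- A max cone: a subset of `ℝ≥0ⁿ` closed under pointwise max `⊔` and under
multiplication by nonnegative scalars. -/
def MaxCone {n : ℕ} (K : Set (Fin n → ℝ≥0)) : Prop :=
  0 ∈ K ∧ (∀ x ∈ K, ∀ y ∈ K, x ⊔ y ∈ K) ∧ (∀ (c : ℝ≥0), ∀ x ∈ K, c • x ∈ K)

/-- `u` is an extremal in `K` if `u = v ⊔ w` with `v, w ∈ K` implies `u = v` or `u = w`. -/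
def IsExtremal {n : ℕ} (K : Set (Fin n → ℝ≥0)) (u : Fin n → ℝ≥0) : Prop :=
  u ∈ K ∧ ∀ v ∈ K, ∀ w ∈ K, u = v ⊔ w → u = v ∨ u = w

/-- A vector is scaled if its max norm `⨆ i, x i` equals `1`. -/
def Scaled {n : ℕ} (x : Fin n → ℝ≥0) : Prop := (⨆ i, x i) = 1

/-- The support of a vector. -/
def supp {n : ℕ} (v : Fin n → ℝ≥0) : Set (Fin n) := {j | 0 < v j}

/-- For `j ∈ supp u`, `rescale u j = (1 / u j) • u`, the `j`-scaling `u(j)`. -/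
noncomputable def rescale {n : ℕ} (u : Fin n → ℝ≥0) (j : Fin n) : Fin n → ℝ≥0 :=
  (u j)⁻¹ • u

/-- `T(j) = {u(j) : u ∈ T, j ∈ supp u}`. -/
noncomputable def setScale {n : ℕ} (T : Set (Fin n → ℝ≥0)) (j : Fin n) :
    Set (Fin n → ℝ≥0) :=
  {y | ∃ u ∈ T, j ∈ supp u ∧ y = rescale u j}

/-- `u` is minimal in `T` if `v ∈ T` and `v ≤ u` imply `v = u`. -/
def MinimalIn {n : ℕ} (T : Set (Fin n → ℝ≥0)) (u : Fin n → ℝ≥0) : Prop :=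
  u ∈ T ∧ ∀ v ∈ T, v ≤ u → v = u

/-- A set is totally dependent if each of its elements is a max combination of
the remaining ones. -/
def TotallyDependent {n : ℕ} (S : Set (Fin n → ℝ≥0)) : Prop :=
  ∀ x ∈ S, x ∈ MaxSpan (S \ {x})

/-- A set is independent if none of its elements is a max combination of
the remaining ones. -/
def IndependentSet {n : ℕ} (S : Set (Fin n → ℝ≥0)) : Prop :=
  ∀ x ∈ S, x ∉ MaxSpan (S \ {x})

/-- A basis for `K` is an independent set of generators for `K`. -/
def IsBasis {n : ℕ} (S K : Set (Fin n → ℝ≥0)) : Prop :=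
  IndependentSet S ∧ MaxSpan S = K

lemma maxSpan_zero_mem {n : ℕ} (S : Set (Fin n → ℝ≥0)) : (0 : Fin n → ℝ≥0) ∈ MaxSpan S :=
  ⟨∅, fun _ => 0, by simp, by simp; rfl⟩

lemma maxSpan_self_mem' {n : ℕ} {S : Set (Fin n → ℝ≥0)} {x} (hx : x ∈ S) : x ∈ MaxSpan S :=
  ⟨{x}, fun _ => 1, by simpa, by simp⟩

lemma mySmulLe {n : ℕ} {a b : ℝ≥0} (h : a ≤ b) (x : Fin n → ℝ≥0) : a • x ≤ b • x :=
  fun i => mul_le_mul_left h (x i)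

lemma maxSpan_sup_mem {n : ℕ} {S : Set (Fin n → ℝ≥0)} {u v}
    (hu : u ∈ MaxSpan S) (hv : v ∈ MaxSpan S) : u ⊔ v ∈ MaxSpan S := by
  classical
  obtain ⟨F1, l1, hF1, rfl⟩ := hu
  obtain ⟨F2, l2, hF2, rfl⟩ := hv
  refine ⟨F1 ∪ F2, fun s => (if s ∈ F1 then l1 s else 0) ⊔ (if s ∈ F2 then l2 s else 0),
    by rw [Finset.coe_union]; exact Set.union_subset hF1 hF2, ?_⟩
  apply le_antisymm
  · apply sup_le
    · refine Finset.sup_le fun s hs => le_trans ?_ (Finset.le_sup (Finset.mem_union_left _ hs))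
      dsimp only
      exact mySmulLe (by rw [if_pos hs]; exact le_sup_left) s
    · refine Finset.sup_le fun s hs => le_trans ?_ (Finset.le_sup (Finset.mem_union_right _ hs))
      dsimp only
      exact mySmulLe (by rw [if_pos hs]; exact le_sup_right) s
  · refine Finset.sup_le fun s hs => ?_
    have h1 : (if s ∈ F1 then l1 s else 0) • s ≤ F1.sup (fun x => l1 x • x) ⊔ F2.sup (fun x => l2 x • x) := by
      by_cases h : s ∈ F1
      · rw [if_pos h]; exact le_sup_of_le_left (Finset.le_sup (f := fun x => l1 x • x) h)
      · rw [if_neg h, zero_smul]; intro i; simp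
    have h2 : (if s ∈ F2 then l2 s else 0) • s ≤ F1.sup (fun x => l1 x • x) ⊔ F2.sup (fun x => l2 x • x) := by
      by_cases h : s ∈ F2
      · rw [if_pos h]; exact le_sup_of_le_right (Finset.le_sup (f := fun x => l2 x • x) h)
      · rw [if_neg h, zero_smul]; intro i; simp
    dsimp only
    rcases le_total (if s ∈ F1 then l1 s else 0) (if s ∈ F2 then l2 s else 0) with h | h
    · rw [sup_eq_right.mpr h]; exact h2
    · rw [sup_eq_left.mpr h]; exact h1

lemma maxSpan_decomp {n : ℕ} {S : Set (Fin n → ℝ≥0)} (x : Fin n → ℝ≥0) {u : Fin n → ℝ≥0}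
    (hu : u ∈ MaxSpan S) :
    ∃ (c : ℝ≥0) (R : Fin n → ℝ≥0), R ∈ MaxSpan (S \ {x}) ∧ u = c • x ⊔ R := by
  classical
  obtain ⟨F, l, hF, rfl⟩ := hu
  by_cases hx : x ∈ F
  · refine ⟨l x, (F.erase x).sup (fun s => l s • s), ⟨F.erase x, l, ?_, rfl⟩, ?_⟩
    · intro s hs
      rw [Finset.coe_erase] at hs
      exact ⟨hF hs.1, hs.2⟩
    · conv_lhs => rw [← Finset.insert_erase hx, Finset.sup_insert]
  · refine ⟨0, F.sup (fun s => l s • s), ⟨F, l, ?_, rfl⟩, ?_⟩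
    · intro s hs
      exact ⟨hF hs, fun h => hx (by rwa [h] at hs)⟩
    · rw [zero_smul]
      exact (sup_eq_right.mpr (by intro i; simp)).symm

lemma perturbLemma {n : ℕ} {K : Set (Fin n → ℝ≥0)} (hopen : IsOpen (K \ {0}))
    {x : Fin n → ℝ≥0} (hxK : x ∈ K) (hx0 : x ≠ 0) (p : Fin n) :
    ∃ c : ℝ≥0, c < 1 ∧ Function.update x p (c * x p) ∈ K := by
  classical
  have hcont : Continuous (fun c : ℝ≥0 => Function.update x p (c * x p)) := by
    apply continuous_pi
    intro i
    simp only [Function.update_apply]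
    by_cases hip : i = p
    · simp only [if_pos hip]
      exact (continuous_id.mul continuous_const)
    · simp only [if_neg hip]
      exact continuous_const
  have h1 : (1 : ℝ≥0) ∈ (fun c : ℝ≥0 => Function.update x p (c * x p)) ⁻¹' (K \ {0}) := by
    simp only [Set.mem_preimage, one_mul, Function.update_eq_self]
    exact ⟨hxK, hx0⟩
  obtain ⟨ε, hε, hball⟩ := Metric.isOpen_iff.mp (hopen.preimage hcont) 1 h1
  set δ : ℝ≥0 := Real.toNNReal (min (ε / 2) (1 / 2)) with hδ
  have hδpos : 0 < δ := by
    rw [hδ, Real.toNNReal_pos]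
    exact lt_min (by linarith) (by norm_num)
  have hδle : (δ : ℝ) ≤ 1 / 2 := by
    rw [hδ, Real.coe_toNNReal _ (le_of_lt (lt_min (by linarith) (by norm_num)))]
    exact min_le_right _ _
  have hδlt : (δ : ℝ) < ε := by
    rw [hδ, Real.coe_toNNReal _ (le_of_lt (lt_min (by linarith) (by norm_num)))]
    calc min (ε / 2) (1 / 2) ≤ ε / 2 := min_le_left _ _
      _ < ε := by linarith
  have hδ1 : δ ≤ 1 := by
    rw [← NNReal.coe_le_coe]; push_cast; linarith
  refine ⟨1 - δ, ?_, ?_⟩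
  · exact tsub_lt_self one_pos hδpos
  · have hmem : (1 - δ : ℝ≥0) ∈ Metric.ball (1 : ℝ≥0) ε := by
      rw [Metric.mem_ball, NNReal.dist_eq, NNReal.coe_sub hδ1]
      push_cast
      have h0 : (0:ℝ) ≤ δ := δ.coe_nonneg
      rw [abs_of_nonpos (by linarith)]
      linarith
    exact (hball hmem).1

lemma twoPos {n : ℕ} {K : Set (Fin n → ℝ≥0)} (hK : MaxCone K)
    (hunit : ∀ p : Fin n, Pi.single p (1 : ℝ≥0) ∉ K)
    {x : Fin n → ℝ≥0} (hxK : x ∈ K) (hx0 : x ≠ 0) :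
    ∃ p q : Fin n, p ≠ q ∧ 0 < x p ∧ 0 < x q := by
  obtain ⟨p, hp⟩ : ∃ p, x p ≠ 0 := by
    by_contra h
    push_neg at h
    exact hx0 (funext h)
  by_contra h
  push_neg at h
  have hxj : ∀ j : Fin n, j ≠ p → x j = 0 := by
    intro j hj
    exact le_antisymm (h p j (Ne.symm hj) (pos_iff_ne_zero.mpr hp)) zero_le
  have hmem : Pi.single p (1 : ℝ≥0) ∈ K := by
    have h2 := hK.2.2 (x p)⁻¹ x hxK
    have hx : (x p)⁻¹ • x = Pi.single p (1 : ℝ≥0) := by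
      funext j
      by_cases hj : j = p
      · subst hj
        show (x j)⁻¹ * x j = _
        rw [inv_mul_cancel₀ hp]
        simp
      · show (x p)⁻¹ * x j = _
        rw [hxj j hj, mul_zero, Pi.single_apply, if_neg hj]
    rwa [hx] at h2
  exact hunit p hmem

/-- if `K` is an open max cone (i.e. `K \ {0}` is open) containing
no unit vector `eᵖ`, then every generating set of `K` is totally dependent. -/
theorem stmt12 {n : ℕ} (K : Set (Fin n → ℝ≥0)) (hK : MaxCone K)
    (hopen : IsOpen (K \ {0}))
    (hunit : ∀ p : Fin n, Pi.single p (1 : ℝ≥0) ∉ K) :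
    ∀ S : Set (Fin n → ℝ≥0), MaxSpan S = K → TotallyDependent S := by
  intro S hS x hxS
  by_cases hx0 : x = 0
  · subst hx0; exact maxSpan_zero_mem _
  have hxK : x ∈ K := hS ▸ maxSpan_self_mem' hxS
  obtain ⟨p, q, hpq, hp, hq⟩ := twoPos hK hunit hxK hx0
  obtain ⟨c₁, hc₁, hy⟩ := perturbLemma hopen hxK hx0 p
  obtain ⟨c₂, hc₂, hz⟩ := perturbLemma hopen hxK hx0 q
  set y := Function.update x p (c₁ * x p) with hydef
  set z := Function.update x q (c₂ * x q) with hzdef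
  obtain ⟨a, R₁, hR₁, hya⟩ := maxSpan_decomp x (show y ∈ MaxSpan S from hS.symm ▸ hy)
  obtain ⟨b, R₂, hR₂, hzb⟩ := maxSpan_decomp x (show z ∈ MaxSpan S from hS.symm ▸ hz)
  have hyp : y p = c₁ * x p := Function.update_self p _ x
  have hzq : z q = c₂ * x q := Function.update_self q _ x
  have hzp : z p = x p := Function.update_of_ne hpq _ x
  have hyq : y q = x q := Function.update_of_ne (Ne.symm hpq) _ x
  -- a < 1 and b < 1
  have ha : a < 1 := by
    have h1 : a * x p ≤ y p := by
      have := congrFun hya p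
      rw [this]
      exact le_sup_left (a := a * x p) (b := R₁ p)
    rw [hyp] at h1
    by_contra hge
    push_neg at hge
    have : x p ≤ a * x p := le_mul_of_one_le_left zero_le hge
    have hlt : c₁ * x p < x p := by
      calc c₁ * x p < 1 * x p := mul_lt_mul_of_pos_right hc₁ hp
        _ = x p := one_mul _
    exact absurd (le_trans this h1) (not_le.mpr hlt)
  have hb : b < 1 := by
    have h1 : b * x q ≤ z q := by
      have := congrFun hzb q
      rw [this]
      exact le_sup_left (a := b * x q) (b := R₂ q)
    rw [hzq] at h1
    by_contra hge
    push_neg at hge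
    have : x q ≤ b * x q := le_mul_of_one_le_left zero_le hge
    have hlt : c₂ * x q < x q := by
      calc c₂ * x q < 1 * x q := mul_lt_mul_of_pos_right hc₂ hq
        _ = x q := one_mul _
    exact absurd (le_trans this h1) (not_le.mpr hlt)
  -- x = y ⊔ z
  have hkey : x = y ⊔ z := by
    funext i
    show x i = y i ⊔ z i
    by_cases hip : i = p
    · subst hip
      rw [hyp, hzp]
      exact (sup_eq_right.mpr (mul_le_of_le_one_left zero_le hc₁.le)).symm
    · by_cases hiq : i = q
      · subst hiq
        rw [hzq, hyq]
        exact (sup_eq_left.mpr (mul_le_of_le_one_left zero_le hc₂.le)).symm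
      · rw [hydef, hzdef, Function.update_of_ne hip _ x, Function.update_of_ne hiq _ x]
        exact (sup_idem _).symm
  -- conclude x = R₁ ⊔ R₂
  have hRmem : R₁ ⊔ R₂ ∈ MaxSpan (S \ {x}) := maxSpan_sup_mem hR₁ hR₂
  have hxR : x = R₁ ⊔ R₂ := by
    apply le_antisymm
    · intro i
      by_cases hxi : x i = 0
      · rw [hxi]; exact zero_le
      have hxi' : 0 < x i := pos_iff_ne_zero.mpr hxi
      have heq : x i = (a * x i ⊔ R₁ i) ⊔ (b * x i ⊔ R₂ i) := by
        have h1 := congrFun hkey i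
        have h2 := congrFun hya i
        have h3 := congrFun hzb i
        calc x i = y i ⊔ z i := h1
          _ = (a * x i ⊔ R₁ i) ⊔ (b * x i ⊔ R₂ i) := by rw [h2, h3]; rfl
      have halt : a * x i < x i := by
        calc a * x i < 1 * x i := mul_lt_mul_of_pos_right ha hxi'
          _ = x i := one_mul _
      have hblt : b * x i < x i := by
        calc b * x i < 1 * x i := mul_lt_mul_of_pos_right hb hxi'
          _ = x i := one_mul _
      have hle : x i ≤ (a * x i ⊔ R₁ i) ⊔ (b * x i ⊔ R₂ i) := le_of_eq heq
      rw [le_sup_iff, le_sup_iff, le_sup_iff] at hle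
      show x i ≤ R₁ i ⊔ R₂ i
      rcases hle with (h | h) | (h | h)
      · exact absurd h (not_le.mpr halt)
      · exact le_sup_of_le_left h
      · exact absurd h (not_le.mpr hblt)
      · exact le_sup_of_le_right h
    · have hR1x : R₁ ≤ x := by
        rw [hkey]
        exact le_trans (hya ▸ le_sup_right) le_sup_left
      have hR2x : R₂ ≤ x := by
        rw [hkey]
        exact le_trans (hzb ▸ le_sup_right) le_sup_right
      exact sup_le hR1x hR2x
  rwa [← hxR] at hRmem
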